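/- Let x ~ N(μ, Σ) be a Gaussian random vector in R^D, and let A ∈ R^{m×D}, B ∈ R^{n×D}, and β ∈ range(BΣ). Define M(ξ) = A ξ + A Σ Bᵀ (B Σ Bᵀ)⁻¹ (β − B ξ) for ξ ∈ R^D (using the Moore–Penrose pseudoinverse where needed). Then the random vector M(x) has the same distribution as the conditional distribution of A x given B x = β, namely Gaussian with mean A μ + A Σ Bᵀ (B Σ Bᵀ)⁻¹ (β − B μ) and covariance A Σ Aᵀ − A Σ Bᵀ (B Σ Bᵀ)⁻¹ B Σ Aᵀ. -/

import Mathlib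

open Matrix MeasureTheory ProbabilityTheory

/-- A random vector is Gaussian with mean `m` and covariance `C` if every linear
functional of it is a real Gaussian with the corresponding moments. -/
def IsGaussianVec {Ω : Type*} [MeasurableSpace Ω] (μP : Measure Ω) {n : Type*} [Fintype n]
    (X : Ω → (n → ℝ)) (m : n → ℝ) (C : Matrix n n ℝ) : Prop :=
  ∀ a : n → ℝ,
    μP.map (fun ω => ∑ i, a i * X ω i) =
      gaussianReal (∑ i, a i * m i) (Real.toNNReal (a ⬝ᵥ (C *ᵥ a)))

/-- Matheron's rule: for `x ~ N(μ, Σ)`, `A`, `B` matrices, `β ∈ range(BΣ)`, and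
`P` the Moore–Penrose pseudoinverse of `B Σ Bᵀ` (characterized by the four Penrose
conditions), the random vector `M(x) = A x + A Σ Bᵀ P (β - B x)` is Gaussian with
mean `A μ + A Σ Bᵀ P (β - B μ)` and covariance `A Σ Aᵀ - A Σ Bᵀ P B Σ Aᵀ`,
i.e. it has the same distribution as the conditional distribution of `A x` given
`B x = β`. -/
theorem matheron_rule {D m n : ℕ} {Ω : Type*} [MeasurableSpace Ω]
    (μP : Measure Ω) [IsProbabilityMeasure μP]
    (X : Ω → (Fin D → ℝ)) (μ : Fin D → ℝ) (Sg : Matrix (Fin D) (Fin D) ℝ)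
    (hSg : Sg.PosSemidef) (hX : IsGaussianVec μP X μ Sg)
    (A : Matrix (Fin m) (Fin D) ℝ) (B : Matrix (Fin n) (Fin D) ℝ)
    (β : Fin n → ℝ) (hβ : ∃ ξ, (B * Sg) *ᵥ ξ = β)
    (P : Matrix (Fin n) (Fin n) ℝ)
    (hP1 : (B * Sg * Bᵀ) * P * (B * Sg * Bᵀ) = B * Sg * Bᵀ)
    (hP2 : P * (B * Sg * Bᵀ) * P = P)
    (hP3 : ((B * Sg * Bᵀ) * P)ᵀ = (B * Sg * Bᵀ) * P)
    (hP4 : (P * (B * Sg * Bᵀ))ᵀ = P * (B * Sg * Bᵀ)) :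
    IsGaussianVec μP
      (fun ω => A *ᵥ X ω + (A * Sg * Bᵀ * P) *ᵥ (β - B *ᵥ X ω))
      (A *ᵥ μ + (A * Sg * Bᵀ * P) *ᵥ (β - B *ᵥ μ))
      (A * Sg * Aᵀ - A * Sg * Bᵀ * P * B * Sg * Aᵀ) := by
  -- Preliminaries: the square root of `Sg` and pseudoinverse identities.
  have hSgt : Sgᵀ = Sg := by
    rw [← Matrix.conjTranspose_eq_transpose_of_trivial]; exact hSg.isHermitian
  set L := (open scoped MatrixOrder in CFC.sqrt Sg) with hLdef
  have hL : L * L = Sg := by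
    open scoped MatrixOrder in exact CFC.sqrt_mul_sqrt_self Sg hSg.nonneg
  have hLt : Lᵀ = L := by
    rw [← Matrix.conjTranspose_eq_transpose_of_trivial]; open scoped MatrixOrder in exact (CFC.sqrt_nonneg Sg).posSemidef.isHermitian
  set C := B * L with hCdef
  have hCt : Cᵀ = L * Bᵀ := by rw [hCdef, Matrix.transpose_mul, hLt]
  have hCC : C * Cᵀ = B * Sg * Bᵀ := by
    rw [hCdef, hCt, ← hL]; simp only [Matrix.mul_assoc]
  set Q := P * (B * Sg * Bᵀ) with hQ
  have e1 : (B * Sg * Bᵀ) * Q = B * Sg * Bᵀ := by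
    rw [hQ, ← Matrix.mul_assoc]; exact hP1
  have hMt : (Cᵀ * Q - Cᵀ)ᴴ = Q * C - C := by
    rw [Matrix.conjTranspose_eq_transpose_of_trivial]
    simp [Matrix.transpose_sub, Matrix.transpose_mul, ← hQ, hP4]
  have hMM : (Cᵀ * Q - Cᵀ)ᴴ * (Cᵀ * Q - Cᵀ) = 0 := by
    rw [hMt]
    have expand : (Q * C - C) * (Cᵀ * Q - Cᵀ)
        = Q * (C * Cᵀ) * Q - Q * (C * Cᵀ) - (C * Cᵀ) * Q + C * Cᵀ := by
      simp only [Matrix.sub_mul, Matrix.mul_sub, Matrix.mul_assoc]; abel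
    have e2 : Q * (B * Sg * Bᵀ) * Q = Q * (B * Sg * Bᵀ) := by
      rw [Matrix.mul_assoc, e1]
    rw [expand, hCC, e2, e1]; abel
  have hM0 : Cᵀ * Q - Cᵀ = 0 := Matrix.conjTranspose_mul_self_eq_zero.mp hMM
  have key1 : Cᵀ * Q = Cᵀ := sub_eq_zero.mp hM0
  have key2 : Q * C = C := by
    have h := congrArg Matrix.transpose key1
    rw [Matrix.transpose_mul, Matrix.transpose_transpose, hQ, hP4] at h; exact h
  have hSPt : (B * Sg * Bᵀ) * Pᵀ = Q := by
    have h := hP4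
    rw [Matrix.transpose_mul] at h
    calc (B * Sg * Bᵀ) * Pᵀ = (B * Sg * Bᵀ)ᵀ * Pᵀ := by
          rw [show (B * Sg * Bᵀ)ᵀ = B * Sg * Bᵀ by
            simp [Matrix.transpose_mul, hSgt, Matrix.mul_assoc]]
      _ = Q := h
  have k4Z : ∀ (Z : Matrix (Fin D) (Fin m) ℝ),
      (B * Sg * Bᵀ) * (Pᵀ * (C * Z)) = C * Z := by
    intro Z
    rw [← Matrix.mul_assoc, hSPt, ← Matrix.mul_assoc, key2]
  have k2c : (B * Sg * Bᵀ) * (Pᵀ * C) = C := by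
    rw [← Matrix.mul_assoc, hSPt, key2]
  have step : Cᵀ * (P * ((B * Sg * Bᵀ) * (Pᵀ * C))) = Cᵀ * (Pᵀ * C) := by
    calc Cᵀ * (P * ((B * Sg * Bᵀ) * (Pᵀ * C))) = (Cᵀ * Q) * (Pᵀ * C) := by
          rw [hQ]; simp only [Matrix.mul_assoc]
      _ = Cᵀ * (Pᵀ * C) := by rw [key1]
  have key3 : Cᵀ * (Pᵀ * C) = Cᵀ * (P * C) := by
    rw [← step, k2c]
  have k3Z : Cᵀ * (Pᵀ * C) * (L * Aᵀ) = Cᵀ * (P * C) * (L * Aᵀ) := by rw [key3]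
  have k3Z' := k3Z
  rw [hCt, hCdef] at k3Z'
  simp only [Matrix.mul_assoc] at k3Z'
  have k4Z' := k4Z (L * Aᵀ)
  rw [hCdef, ← hL] at k4Z'
  simp only [Matrix.mul_assoc] at k4Z'
  have hX2 : A * (Sg * (Bᵀ * (Pᵀ * (B * (Sg * Aᵀ)))))
      = A * (Sg * (Bᵀ * (P * (B * (Sg * Aᵀ))))) := by
    rw [← hL]; simp only [Matrix.mul_assoc]; rw [k3Z']
  have hX4 : A * (Sg * (Bᵀ * (P * (B * (Sg * (Bᵀ * (Pᵀ * (B * (Sg * Aᵀ)))))))))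
      = A * (Sg * (Bᵀ * (P * (B * (Sg * Aᵀ))))) := by
    rw [← hL]; simp only [Matrix.mul_assoc]; rw [k4Z']
  set K : Matrix (Fin m) (Fin n) ℝ := A * Sg * Bᵀ * P with hK
  have cov : (A - K * B) * Sg * (A - K * B)ᵀ
      = A * Sg * Aᵀ - A * Sg * Bᵀ * P * B * Sg * Aᵀ := by
    simp only [hK, Matrix.transpose_sub, Matrix.transpose_mul, Matrix.transpose_transpose,
      hSgt, Matrix.sub_mul, Matrix.mul_sub, Matrix.mul_assoc]
    rw [hX2, hX4]
    abel
  -- The affine functional identity.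
  intro a
  set w : Fin D → ℝ := (A - K * B)ᵀ *ᵥ a with hw
  set c : ℝ := a ⬝ᵥ (K *ᵥ β) with hc
  have haff : ∀ x : Fin D → ℝ,
      (∑ i, a i * (A *ᵥ x + K *ᵥ (β - B *ᵥ x)) i) = (∑ j, w j * x j) + c := by
    intro x
    show a ⬝ᵥ (A *ᵥ x + K *ᵥ (β - B *ᵥ x)) = w ⬝ᵥ x + c
    rw [hw, Matrix.mulVec_transpose, hc, ← Matrix.dotProduct_mulVec]
    simp only [Matrix.mulVec_sub, Matrix.sub_mulVec, dotProduct_add,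
      dotProduct_sub, ← Matrix.mulVec_mulVec]
    ring
  have hvar : w ⬝ᵥ (Sg *ᵥ w) =
      a ⬝ᵥ ((A * Sg * Aᵀ - A * Sg * Bᵀ * P * B * Sg * Aᵀ) *ᵥ a) := by
    rw [← cov, hw, Matrix.mulVec_transpose, ← Matrix.dotProduct_mulVec,
      ← Matrix.mulVec_mulVec, ← Matrix.mulVec_mulVec, Matrix.mulVec_transpose]
  have hXw := hX w
  have hmeas : AEMeasurable (fun ω => ∑ j, w j * X ω j) μP := by
    by_contra h
    rw [Measure.map_of_not_aemeasurable h] at hXw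
    exact (IsProbabilityMeasure.ne_zero (gaussianReal _ _)) hXw.symm
  calc μP.map (fun ω => ∑ i, a i * (A *ᵥ X ω + K *ᵥ (β - B *ᵥ X ω)) i)
      = μP.map (fun ω => (∑ j, w j * X ω j) + c) := by
        congr 1; funext ω; exact haff (X ω)
    _ = (μP.map (fun ω => ∑ j, w j * X ω j)).map (fun y => y + c) := by
        exact (AEMeasurable.map_map_of_aemeasurable
          (measurable_add_const c).aemeasurable hmeas).symm
    _ = (gaussianReal (∑ j, w j * μ j) (Real.toNNReal (w ⬝ᵥ (Sg *ᵥ w)))).map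
          (fun y => y + c) := by rw [hXw]
    _ = gaussianReal ((∑ j, w j * μ j) + c) (Real.toNNReal (w ⬝ᵥ (Sg *ᵥ w))) :=
        gaussianReal_map_add_const c
    _ = gaussianReal (∑ i, a i * (A *ᵥ μ + K *ᵥ (β - B *ᵥ μ)) i)
          (Real.toNNReal (a ⬝ᵥ ((A * Sg * Aᵀ - A * Sg * Bᵀ * P * B * Sg * Aᵀ) *ᵥ a))) := by
        rw [← haff μ, hvar]
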